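/- Let X_1,...,X_c be i.i.d. random vectors in R^d where X equals (a_j / p_j) e_j with probability p_j = |a_j| / ||a||_1 for each j in [d] (a ≠ 0). Then the estimator â = (1/c) Σ_t X_t satisfies E[â] = a and E[||â||_2^2] ≤ ||a||_2^2 (1 + s(a)/c), where s(a) = ||a||_1^2/||a||_2^2. -/

import Mathlib

open MeasureTheory ProbabilityTheory Finset

/-- `c` i.i.d. importance samples of a vector `a` (index `j` with probability
`p_j = |a_j|/‖a‖₁`, value `(a_j/p_j) e_j`), averaged: the estimator `â` satisfies
`E[â] = a` and `E[‖â‖₂²] ≤ ‖a‖₂² (1 + s(a)/c)` where `s(a) = ‖a‖₁²/‖a‖₂²`. -/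
theorem stmt_2 {d : ℕ} (a : Fin d → ℝ) (ha : a ≠ 0) (c : ℕ) (hc : 0 < c)
    {Ω : Type*} [MeasurableSpace Ω] (μ : Measure Ω) [IsProbabilityMeasure μ]
    (J : Fin c → Ω → Fin d) (hJmeas : ∀ t, Measurable (J t))
    (hindep : iIndepFun J μ)
    (hdist : ∀ t j, μ {ω | J t ω = j} = ENNReal.ofReal (|a j| / ∑ i, |a i|))
    (ahat : Ω → Fin d → ℝ)
    (hahat : ∀ ω i, ahat ω i =
      (1 / c) * ∑ t, (if J t ω = i then a i / (|a i| / ∑ k, |a k|) else 0)) :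
    (∀ i, ∫ ω, ahat ω i ∂μ = a i) ∧
      ∫ ω, ∑ i, (ahat ω i) ^ 2 ∂μ ≤
        (∑ i, (a i) ^ 2) * (1 + ((∑ i, |a i|) ^ 2 / ∑ i, (a i) ^ 2) / c) := by
  classical
  obtain ⟨j0, hj0⟩ := Function.ne_iff.mp ha
  replace hj0 : a j0 ≠ 0 := hj0
  set S := ∑ k, |a k| with hSdef
  have hS : 0 < S := Finset.sum_pos' (fun i _ => abs_nonneg _)
    ⟨j0, Finset.mem_univ _, abs_pos.mpr hj0⟩
  have hQ : 0 < ∑ i, (a i) ^ 2 := Finset.sum_pos' (fun i _ => sq_nonneg _)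
    ⟨j0, Finset.mem_univ _, by positivity⟩
  have hcR : (c : ℝ) ≠ 0 := Nat.cast_ne_zero.mpr hc.ne'
  set p : Fin d → ℝ := fun i => |a i| / S with hpdef
  set v : Fin d → ℝ := fun i => a i / p i with hvdef
  have hp0 : ∀ i, 0 ≤ p i := fun i => div_nonneg (abs_nonneg _) hS.le
  have hvp : ∀ i, p i * v i = a i := by
    intro i
    by_cases h : a i = 0
    · simp [hvdef, hpdef, h]
    · have hpne : p i ≠ 0 := div_ne_zero (abs_ne_zero.mpr h) hS.ne'
      rw [hvdef]
      field_simp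
  have hv2p : ∀ i, p i * (v i) ^ 2 = |a i| * S := by
    intro i
    by_cases h : a i = 0
    · simp [hvdef, hpdef, h]
    · have hane : |a i| ≠ 0 := abs_ne_zero.mpr h
      have hpne : p i ≠ 0 := div_ne_zero hane hS.ne'
      have hv : v i = a i * S / |a i| := by
        simp only [hvdef, hpdef]
        rw [div_div_eq_mul_div]
      rw [hv, hpdef]
      have h2 : (a i) ^ 2 = |a i| ^ 2 := (sq_abs (a i)).symm
      field_simp
      nlinarith [sq_abs (a i), hS]
  -- indicator representation
  have hA : ∀ (t : Fin c) (i : Fin d), MeasurableSet (J t ⁻¹' ({i} : Set (Fin d))) :=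
    fun t i => hJmeas t (measurableSet_singleton i)
  have hμA : ∀ (t : Fin c) (i : Fin d), μ (J t ⁻¹' {i}) = ENNReal.ofReal (p i) := by
    intro t i
    exact hdist t i
  have hμr : ∀ (t : Fin c) (i : Fin d), (μ (J t ⁻¹' {i})).toReal = p i := fun t i => by
    rw [hμA, ENNReal.toReal_ofReal (hp0 i)]
  have hXeq : ∀ (t : Fin c) (i : Fin d) (ω : Ω),
      (if J t ω = i then a i / (|a i| / S) else 0)
        = (J t ⁻¹' {i}).indicator (fun _ => v i) ω := by
    intro t i ω
    simp [Set.indicator_apply, hvdef, hpdef]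
  have hahat' : ∀ ω i, ahat ω i
      = (1 / (c : ℝ)) * ∑ t, (J t ⁻¹' {i}).indicator (fun _ => v i) ω := by
    intro ω i
    rw [hahat]
    congr 1
    exact Finset.sum_congr rfl fun t _ => hXeq t i ω
  -- first moment
  have hint : ∀ (t : Fin c) (i : Fin d),
      ∫ ω, (J t ⁻¹' {i}).indicator (fun _ => v i) ω ∂μ = a i := by
    intro t i
    rw [integral_indicator_const (v i) (hA t i), measureReal_def, hμr t i, smul_eq_mul, hvp i]
  have h1 : ∀ i, ∫ ω, ahat ω i ∂μ = a i := by
    intro i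
    calc ∫ ω, ahat ω i ∂μ
        = ∫ ω, (1 / (c : ℝ)) * ∑ t, (J t ⁻¹' {i}).indicator (fun _ => v i) ω ∂μ :=
          integral_congr_ae (Filter.Eventually.of_forall fun ω => hahat' ω i)
      _ = (1 / (c : ℝ)) * ∑ t, ∫ ω, (J t ⁻¹' {i}).indicator (fun _ => v i) ω ∂μ := by
          rw [integral_const_mul,
            integral_finset_sum _ (fun t _ => (integrable_const (v i)).indicator (hA t i))]
      _ = a i := by
          rw [Finset.sum_congr rfl fun t _ => hint t i, Finset.sum_const, card_univ,
            Fintype.card_fin, nsmul_eq_mul]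
          field_simp
  refine ⟨h1, ?_⟩
  -- second moment
  have hprod : ∀ (t s : Fin c) (i : Fin d) (ω : Ω),
      (J t ⁻¹' {i}).indicator (fun _ => v i) ω * (J s ⁻¹' {i}).indicator (fun _ => v i) ω
        = ((J t ⁻¹' {i}) ∩ (J s ⁻¹' {i})).indicator (fun _ => (v i) ^ 2) ω := by
    intro t s i ω
    by_cases h1 : ω ∈ J t ⁻¹' ({i} : Set (Fin d)) <;>
      by_cases h2 : ω ∈ J s ⁻¹' ({i} : Set (Fin d)) <;>
      simp [Set.indicator_apply, h1, h2, sq]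
  have hsq : ∀ (i : Fin d) (ω : Ω), (ahat ω i) ^ 2
      = (1 / (c : ℝ)) ^ 2 * ∑ t, ∑ s,
          ((J t ⁻¹' {i}) ∩ (J s ⁻¹' {i})).indicator (fun _ => (v i) ^ 2) ω := by
    intro i ω
    rw [hahat' ω i, mul_pow, sq (∑ t, (J t ⁻¹' {i}).indicator (fun _ => v i) ω),
      Finset.sum_mul_sum]
    congr 1
    exact Finset.sum_congr rfl fun t _ => Finset.sum_congr rfl fun s _ => hprod t s i ω
  have hpair : ∀ (t s : Fin c) (i : Fin d),
      ∫ ω, ((J t ⁻¹' {i}) ∩ (J s ⁻¹' {i})).indicator (fun _ => (v i) ^ 2) ω ∂μ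
        = if t = s then |a i| * S else (a i) ^ 2 := by
    intro t s i
    rw [integral_indicator_const ((v i) ^ 2) ((hA t i).inter (hA s i)), smul_eq_mul]
    by_cases hts : t = s
    · subst hts
      rw [Set.inter_self, measureReal_def, hμr t i, if_pos rfl]
      exact hv2p i
    · have hind : IndepFun (J t) (J s) μ := hindep.indepFun hts
      rw [if_neg hts, measureReal_def,
        hind.measure_inter_preimage_eq_mul _ _ (measurableSet_singleton i)
          (measurableSet_singleton i),
        hμA t i, hμA s i, ← ENNReal.ofReal_mul (hp0 i),
        ENNReal.toReal_ofReal (mul_nonneg (hp0 i) (hp0 i))]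
      linear_combination (p i * v i + a i) * hvp i
  have h2i : ∀ i, ∫ ω, (ahat ω i) ^ 2 ∂μ
      = (a i) ^ 2 + (|a i| * S - (a i) ^ 2) / c := by
    intro i
    have step1 : ∫ ω, (ahat ω i) ^ 2 ∂μ
        = (1 / (c : ℝ)) ^ 2 * ∑ t, ∑ s,
            ∫ ω, ((J t ⁻¹' {i}) ∩ (J s ⁻¹' {i})).indicator (fun _ => (v i) ^ 2) ω ∂μ := by
      calc ∫ ω, (ahat ω i) ^ 2 ∂μ
          = ∫ ω, (1 / (c : ℝ)) ^ 2 * ∑ t, ∑ s,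
              ((J t ⁻¹' {i}) ∩ (J s ⁻¹' {i})).indicator (fun _ => (v i) ^ 2) ω ∂μ :=
            integral_congr_ae (Filter.Eventually.of_forall fun ω => hsq i ω)
        _ = (1 / (c : ℝ)) ^ 2 * ∑ t, ∑ s,
              ∫ ω, ((J t ⁻¹' {i}) ∩ (J s ⁻¹' {i})).indicator (fun _ => (v i) ^ 2) ω ∂μ := by
            rw [integral_const_mul,
              integral_finset_sum _ (fun t _ => integrable_finset_sum _
                (fun s _ => (integrable_const _).indicator ((hA t i).inter (hA s i))))]
            congr 1
            exact Finset.sum_congr rfl fun t _ =>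
              integral_finset_sum _ fun s _ =>
                (integrable_const _).indicator ((hA t i).inter (hA s i))
    rw [step1, Finset.sum_congr rfl fun t _ => Finset.sum_congr rfl fun s _ => hpair t s i]
    have hsum2 : ∑ t : Fin c, ∑ s : Fin c,
        (if t = s then |a i| * S else (a i) ^ 2)
        = (c : ℝ) * (|a i| * S) + ((c : ℝ) ^ 2 - c) * (a i) ^ 2 := by
      have : ∀ t : Fin c, ∑ s : Fin c, (if t = s then |a i| * S else (a i) ^ 2)
          = |a i| * S + ((c : ℝ) - 1) * (a i) ^ 2 := by
        intro t
        have : ∀ s : Fin c, (if t = s then |a i| * S else (a i) ^ 2)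
            = (a i) ^ 2 + (if t = s then |a i| * S - (a i) ^ 2 else 0) := by
          intro s; by_cases h : t = s <;> simp [h]
        rw [Finset.sum_congr rfl fun s _ => this s, Finset.sum_add_distrib,
          Finset.sum_ite_eq, if_pos (Finset.mem_univ t), Finset.sum_const, card_univ,
          Fintype.card_fin, nsmul_eq_mul]
        ring
      rw [Finset.sum_congr rfl fun t _ => this t, Finset.sum_const, card_univ,
        Fintype.card_fin, nsmul_eq_mul]
      ring
    rw [hsum2]
    field_simp
    ring
  have hsum : ∫ ω, ∑ i, (ahat ω i) ^ 2 ∂μ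
      = ∑ i, ((a i) ^ 2 + (|a i| * S - (a i) ^ 2) / c) := by
    have hint2 : ∀ i : Fin d, Integrable (fun ω => (ahat ω i) ^ 2) μ := by
      intro i
      have heq : (fun ω => (ahat ω i) ^ 2) = fun ω => (1 / (c : ℝ)) ^ 2 * ∑ t, ∑ s,
          ((J t ⁻¹' {i}) ∩ (J s ⁻¹' {i})).indicator (fun _ => (v i) ^ 2) ω :=
        funext fun ω => hsq i ω
      rw [heq]
      exact (integrable_finset_sum _ (fun t _ => integrable_finset_sum _
        (fun s _ => (integrable_const _).indicator ((hA t i).inter (hA s i))))).const_mul _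
    rw [integral_finset_sum _ (fun i _ => hint2 i)]
    exact Finset.sum_congr rfl fun i _ => h2i i
  rw [hsum]
  have hLHS : ∑ i, ((a i) ^ 2 + (|a i| * S - (a i) ^ 2) / c)
      = (∑ i, (a i) ^ 2) + (S ^ 2 - ∑ i, (a i) ^ 2) / c := by
    rw [Finset.sum_add_distrib, ← Finset.sum_div, Finset.sum_sub_distrib, ← Finset.sum_mul, sq]
  have hRHS : (∑ i, (a i) ^ 2) * (1 + (S ^ 2 / ∑ i, (a i) ^ 2) / c)
      = (∑ i, (a i) ^ 2) + S ^ 2 / c := by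
    field_simp
  rw [hLHS, hRHS]
  have h0 : 0 ≤ (∑ i, (a i) ^ 2) / c := by positivity
  have hsub : (S ^ 2 - ∑ i, (a i) ^ 2) / c = S ^ 2 / c - (∑ i, (a i) ^ 2) / c := sub_div _ _ _
  linarith
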